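/- arXiv:2110.00419 — 2 statements merged into one kernel-verified Lean document; each statement's English description precedes it below -/
import Mathlib

section
/- Assume dim_ℂ W ≥ 2. Then A_k = 0 for every k > 2n; that is, Sym^k(W) = I ∩ Sym^k(W) for all k > 2n. -/
open MvPolynomial

/-- The image of `w ∈ W` in the symmetric algebra of `W`, modelled as the
polynomial algebra on a basis `b` of `W`: the linear polynomial `∑ᵢ wᵢ Xᵢ`. -/
noncomputable def polyOf {W ι : Type*} [AddCommGroup W] [Module ℂ W] [Fintype ι]
    (b : Module.Basis ι ℂ W) (w : W) : MvPolynomial ι ℂ :=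
  ∑ i, b.repr w i • X i

/-- The ideal `I ⊆ Sym(W)` generated by the powers `w^{n+1}` for `w ∈ W`
isotropic with respect to the bilinear form `B`. -/
noncomputable def isoIdeal {W ι : Type*} [AddCommGroup W] [Module ℂ W] [Fintype ι]
    (b : Module.Basis ι ℂ W) (B : W →ₗ[ℂ] W →ₗ[ℂ] ℂ) (n : ℕ) : Ideal (MvPolynomial ι ℂ) :=
  Ideal.span {p | ∃ w : W, B w w = 0 ∧ p = polyOf b w ^ (n + 1)}

/-- The degree-`k` graded piece `A_k` of `A = Sym(W)/I`: the image of
`Sym^k(W)` under the quotient map. -/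
noncomputable def gradedPiece {W ι : Type*} [AddCommGroup W] [Module ℂ W] [Fintype ι]
    (b : Module.Basis ι ℂ W) (B : W →ₗ[ℂ] W →ₗ[ℂ] ℂ) (n k : ℕ) :
    Submodule ℂ (MvPolynomial ι ℂ ⧸ isoIdeal b B n) :=
  (homogeneousSubmodule ι ℂ k).map (Ideal.Quotient.mkₐ ℂ (isoIdeal b B n)).toLinearMap

section Aux

variable {W ι : Type*} [AddCommGroup W] [Module ℂ W] [Fintype ι]
    (b : Module.Basis ι ℂ W) (B : W →ₗ[ℂ] W →ₗ[ℂ] ℂ) (n : ℕ)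

lemma polyOf_add (u v : W) : polyOf b (u + v) = polyOf b u + polyOf b v := by
  simp [polyOf, add_smul, Finset.sum_add_distrib]

lemma polyOf_smul (t : ℂ) (v : W) : polyOf b (t • v) = t • polyOf b v := by
  simp [polyOf, Finset.smul_sum, smul_smul]

lemma polyOf_basis [DecidableEq ι] (i : ι) : polyOf b (b i) = X i := by
  simp [polyOf, Finsupp.single_apply]

lemma coeffs_eq_zero_of_eval (M : ℕ) (c : ℕ → ℂ)
    (h : ∀ t : ℂ, ∑ k ∈ Finset.range M, c k * t ^ k = 0) :
    ∀ k ∈ Finset.range M, c k = 0 := by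
  have hP : (∑ k ∈ Finset.range M, Polynomial.C (c k) * Polynomial.X ^ k) = (0 : Polynomial ℂ) := by
    apply Polynomial.funext
    intro r
    simp only [Polynomial.eval_finset_sum, Polynomial.eval_mul, Polynomial.eval_C,
      Polynomial.eval_pow, Polynomial.eval_X, Polynomial.eval_zero]
    exact h r
  intro k hk
  have := congrArg (fun p => Polynomial.coeff p k) hP
  simp only [Polynomial.finset_sum_coeff, Polynomial.coeff_C_mul, Polynomial.coeff_X_pow,
    Polynomial.coeff_zero] at this
  rw [Finset.sum_eq_single k] at this
  · simpa using this
  · intro j _ hj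
    rw [if_neg (Ne.symm hj), mul_zero]
  · intro hk'; exact absurd hk hk'

lemma vec_coeffs_eq_zero {Q : Type*} [AddCommGroup Q] [Module ℂ Q] (M : ℕ) (w : ℕ → Q)
    (h : ∀ t : ℂ, ∑ k ∈ Finset.range M, t ^ k • w k = 0) :
    ∀ k ∈ Finset.range M, w k = 0 := by
  intro k hk
  rw [← Module.forall_dual_apply_eq_zero_iff ℂ]
  intro φ
  refine coeffs_eq_zero_of_eval M (fun k => φ (w k)) ?_ k hk
  intro t
  have := congrArg φ (h t)
  simpa [mul_comm] using this

lemma mem_of_sum_pow_smul_mem {V : Type*} [AddCommGroup V] [Module ℂ V]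
    (p : Submodule ℂ V) (M : ℕ) (v : ℕ → V)
    (h : ∀ t : ℂ, ∑ k ∈ Finset.range M, t ^ k • v k ∈ p) :
    ∀ k ∈ Finset.range M, v k ∈ p := by
  intro k hk
  have h' : ∀ t : ℂ, ∑ k ∈ Finset.range M, t ^ k • p.mkQ (v k) = 0 := by
    intro t
    have : (∑ k ∈ Finset.range M, t ^ k • p.mkQ (v k)) = p.mkQ (∑ k ∈ Finset.range M, t ^ k • v k) := by
      rw [map_sum]
      simp
    rw [this, Submodule.mkQ_apply, Submodule.Quotient.mk_eq_zero]
    exact h t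
  have := vec_coeffs_eq_zero M (fun k => p.mkQ (v k)) h' k hk
  simp only [Submodule.mkQ_apply, Submodule.Quotient.mk_eq_zero] at this
  exact this

lemma exists_isotropic_decomp [FiniteDimensional ℂ W]
    (hsymm : ∀ x y : W, B x y = B y x)
    (hnd : ∀ x : W, (∀ y : W, B x y = 0) → x = 0)
    (hdim : 2 ≤ Module.finrank ℂ W) (w : W) :
    ∃ u v : W, B u u = 0 ∧ B v v = 0 ∧ u + v = w := by
  by_cases hw : B w w = 0
  · exact ⟨0, w, by simp, hw, by simp⟩
  obtain ⟨z, hwz, hz0⟩ : ∃ z : W, B w z = 0 ∧ z ≠ 0 := by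
    have hni : ¬ Function.Injective (B w) := by
      intro hinj
      have := LinearMap.finrank_le_finrank_of_injective hinj
      simp [Module.finrank_self] at this
      omega
    rw [← LinearMap.ker_eq_bot] at hni
    obtain ⟨z, hz, hz0⟩ := Submodule.exists_mem_ne_zero_of_ne_bot hni
    exact ⟨z, hz, hz0⟩
  obtain ⟨y, hy⟩ : ∃ y : W, B w y ^ 2 - B w w * B y y ≠ 0 := by
    by_cases hzz : B z z = 0
    · obtain ⟨y₀, hy₀⟩ : ∃ y₀ : W, B z y₀ ≠ 0 := by
        by_contra hc
        push_neg at hc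
        exact hz0 (hnd z hc)
      set t : ℂ := (B w y₀ ^ 2 - B w w * B y₀ y₀ - B w w ^ 2) / (2 * B w w * B z y₀) with ht
      refine ⟨y₀ + t • z, ?_⟩
      have h1 : B w (y₀ + t • z) = B w y₀ := by
        simp [map_add, map_smul, hwz]
      have h2 : B (y₀ + t • z) (y₀ + t • z) = B y₀ y₀ + 2 * t * B z y₀ := by
        simp only [map_add, map_smul, LinearMap.add_apply, LinearMap.smul_apply, smul_eq_mul]
        rw [hsymm y₀ z, hzz]
        ring
      have h3 : B w y₀ ^ 2 - B w w * (B y₀ y₀ + 2 * t * B z y₀) = B w w ^ 2 := by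
        rw [ht]
        field_simp
        ring
      rw [h1, h2, h3]
      exact pow_ne_zero _ hw
    · refine ⟨z, ?_⟩
      rw [hwz]
      simp [hw, hzz]
  obtain ⟨s, hs⟩ := IsAlgClosed.exists_pow_nat_eq (B w y ^ 2 - B w w * B y y) (n := 2) (by norm_num)
  have hs0 : s ≠ 0 := by
    intro h0
    rw [h0] at hs
    simp at hs
    exact hy hs.symm
  set α : ℂ := (s - B w y) / (B w w) with hα
  have hBu₁ : B w (α • w + y) = s := by
    simp only [map_add, map_smul, smul_eq_mul, hα]
    field_simp
    ring
  have hBu₁' : B (α • w + y) w = s := by rw [hsymm]; exact hBu₁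
  have hiso : B (α • w + y) (α • w + y) = 0 := by
    simp only [map_add, map_smul, LinearMap.add_apply, LinearMap.smul_apply, smul_eq_mul]
    rw [hsymm y w, hα]
    field_simp
    linear_combination hs
  refine ⟨(B w w / (2 * s)) • (α • w + y), w - (B w w / (2 * s)) • (α • w + y), ?_, ?_, by abel⟩
  · simp only [map_smul, LinearMap.smul_apply, smul_eq_mul, hiso]
    ring
  · simp only [map_sub, map_smul, LinearMap.sub_apply, LinearMap.smul_apply, smul_eq_mul, hiso,
      hBu₁, hBu₁']
    field_simp
    ring

variable [FiniteDimensional ℂ W]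
    (hsymm : ∀ x y : W, B x y = B y x)
    (hnd : ∀ x : W, (∀ y : W, B x y = 0) → x = 0)
    (hdim : 2 ≤ Module.finrank ℂ W)

include hsymm hnd hdim

lemma pow_top_mem (w : W) : polyOf b w ^ (2 * n + 1) ∈ isoIdeal b B n := by
  obtain ⟨u, v, hu, hv, huv⟩ := exists_isotropic_decomp B hsymm hnd hdim w
  have hw : polyOf b w = polyOf b u + polyOf b v := by rw [← polyOf_add, huv]
  have hu' : polyOf b u ^ (n + 1) ∈ isoIdeal b B n :=
    Ideal.subset_span ⟨u, hu, rfl⟩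
  have hv' : polyOf b v ^ (n + 1) ∈ isoIdeal b B n :=
    Ideal.subset_span ⟨v, hv, rfl⟩
  rw [hw, add_pow]
  apply Ideal.sum_mem
  intro k hk
  rw [Finset.mem_range] at hk
  rcases le_or_gt (n + 1) k with h | h
  · rw [show k = (n + 1) + (k - (n + 1)) by omega, pow_add]
    exact Ideal.mul_mem_right _ _ (Ideal.mul_mem_right _ _ (Ideal.mul_mem_right _ _ hu'))
  · rw [show 2 * n + 1 - k = (n + 1) + (n - k) by omega, pow_add]
    exact Ideal.mul_mem_right _ _
      (Ideal.mul_mem_left _ _ (Ideal.mul_mem_right _ _ hv'))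

lemma pow_mem_of_le (w : W) (a : ℕ) (ha : 2 * n + 1 ≤ a) :
    polyOf b w ^ a ∈ isoIdeal b B n := by
  rw [show a = (2 * n + 1) + (a - (2 * n + 1)) by omega, pow_add]
  exact Ideal.mul_mem_right _ _ (pow_top_mem b B n hsymm hnd hdim w)

lemma listProdMem (N : ℕ) : ∀ L : List (W × ℕ), L.length ≤ N →
    2 * n + 1 ≤ (L.map Prod.snd).sum →
    (L.map (fun x => polyOf b x.1 ^ x.2)).prod ∈ isoIdeal b B n := by
  induction N with
  | zero =>
    intro L hL hsum
    rw [List.length_eq_zero_iff.mp (Nat.le_zero.mp hL)] at hsum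
    simp at hsum
  | succ N ih =>
    intro L hL hsum
    match L with
    | [] => simp at hsum
    | [x] =>
      simp only [List.map_cons, List.map_nil, List.prod_cons, List.prod_nil, mul_one,
        List.sum_cons, List.sum_nil, add_zero] at hsum ⊢
      exact pow_mem_of_le b B n hsymm hnd hdim x.1 x.2 hsum
    | x :: y :: L'' =>
      simp only [List.map_cons, List.prod_cons, List.sum_cons] at hsum ⊢
      set Pu := polyOf b x.1
      set Pv := polyOf b y.1
      set a := x.2
      set c := y.2
      set R := (L''.map (fun z => polyOf b z.1 ^ z.2)).prod with hR
      have hC : (((a + c).choose c : ℕ) : ℂ) ≠ 0 :=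
        Nat.cast_ne_zero.mpr (Nat.choose_pos (Nat.le_add_left c a)).ne'
      have key : ∀ t : ℂ, ∑ k ∈ Finset.range (a + c + 1),
          t ^ k • (Pv ^ k * Pu ^ (a + c - k) * ((a + c).choose k : MvPolynomial ι ℂ) * R) ∈
          (isoIdeal b B n).restrictScalars ℂ := by
        intro t
        have hmem := ih ((x.1 + t • y.1, a + c) :: L'')
          (by simp at hL ⊢; omega)
          (by simp; omega)
        simp only [List.map_cons, List.prod_cons, List.sum_cons] at hmem
        have hrw : polyOf b (x.1 + t • y.1) = t • Pv + Pu := by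
          rw [polyOf_add, polyOf_smul, add_comm]
        rw [hrw, add_pow] at hmem
        rw [Submodule.restrictScalars_mem]
        convert hmem using 1
        rw [Finset.sum_mul]
        apply Finset.sum_congr rfl
        intro k _
        rw [smul_pow, smul_mul_assoc, smul_mul_assoc, smul_mul_assoc]
      have hvc := mem_of_sum_pow_smul_mem _ _ _ key c
        (Finset.mem_range.mpr (by omega))
      rw [Submodule.restrictScalars_mem] at hvc
      have hcast : (((a + c).choose c : ℕ) : MvPolynomial ι ℂ) =
          MvPolynomial.C ((((a + c).choose c : ℕ)) : ℂ) :=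
        (map_natCast (MvPolynomial.C : ℂ →+* MvPolynomial ι ℂ) _).symm
      have heq : Pv ^ c * Pu ^ (a + c - c) * (((a + c).choose c : ℕ) : MvPolynomial ι ℂ) * R =
          ((((a + c).choose c : ℕ)) : ℂ) • (Pu ^ a * (Pv ^ c * R)) := by
        rw [MvPolynomial.smul_eq_C_mul, hcast, show a + c - c = a by omega]
        ring
      rw [heq] at hvc
      have hvc' : ((((a + c).choose c : ℕ)) : ℂ) • (Pu ^ a * (Pv ^ c * R)) ∈
          (isoIdeal b B n).restrictScalars ℂ := hvc
      have hfin := ((isoIdeal b B n).restrictScalars ℂ).smul_mem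
        (((((a + c).choose c : ℕ)) : ℂ)⁻¹) hvc'
      rw [smul_smul, inv_mul_cancel₀ hC, one_smul] at hfin
      exact hfin

end Aux

/-- If `dim W ≥ 2`, then `A_k = 0` for every `k > 2n`; that is, every
homogeneous polynomial of degree `k > 2n` lies in the ideal `I`. -/
theorem gradedPiece_vanishes_above_top
    {W ι : Type*} [AddCommGroup W] [Module ℂ W] [Fintype ι]
    (b : Module.Basis ι ℂ W) (B : W →ₗ[ℂ] W →ₗ[ℂ] ℂ)
    (hsymm : ∀ x y : W, B x y = B y x)
    (hnd : ∀ x : W, (∀ y : W, B x y = 0) → x = 0)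
    (hdim : 2 ≤ Module.finrank ℂ W)
    (n : ℕ) (hn : 1 ≤ n) :
    ∀ k : ℕ, 2 * n < k →
      gradedPiece b B n k = ⊥ ∧
      ∀ p ∈ homogeneousSubmodule ι ℂ k, p ∈ isoIdeal b B n := by
  classical
  have : FiniteDimensional ℂ W := Module.Finite.of_basis b
  intro k hk
  have main : ∀ p ∈ homogeneousSubmodule ι ℂ k, p ∈ isoIdeal b B n := by
    intro p hp
    rw [mem_homogeneousSubmodule] at hp
    have hps : p = ∑ d ∈ p.support, monomial d (coeff d p) :=
      (support_sum_monomial_coeff p).symm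
    rw [hps]
    apply Ideal.sum_mem
    intro d hd
    have hdeg : d.degree = k := by
      rw [Finsupp.degree_eq_weight_one]
      exact hp (mem_support_iff.mp hd)
    rw [monomial_eq]
    apply Ideal.mul_mem_left
    set L : List (W × ℕ) := d.support.toList.map (fun i => (b i, d i)) with hL
    have h1 : (L.map Prod.snd).sum = ∑ i ∈ d.support, d i := by
      rw [hL, List.map_map]
      exact Finset.sum_map_toList _ _
    have h2 : (L.map (fun z => polyOf b z.1 ^ z.2)).prod = d.prod fun i e => X i ^ e := by
      rw [hL, List.map_map]
      have hfun : ((fun z : W × ℕ => polyOf b z.1 ^ z.2) ∘ fun i => (b i, d i)) =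
          fun i => X i ^ d i := by
        funext i
        simp [polyOf_basis]
      rw [hfun, Finset.prod_map_toList]
      rfl
    rw [← h2]
    refine listProdMem b B n hsymm hnd hdim L.length L le_rfl ?_
    rw [h1]
    have : ∑ i ∈ d.support, d i = k := hdeg
    omega
  refine ⟨?_, main⟩
  apply (Submodule.eq_bot_iff _).mpr
  rintro x ⟨p, hp, rfl⟩
  show (Ideal.Quotient.mkₐ ℂ (isoIdeal b B n)) p = 0
  rw [Ideal.Quotient.mkₐ_eq_mk, Ideal.Quotient.eq_zero_iff_mem]
  exact main p hp
end

section
/- Triangular decomposition of the universal enveloping algebra: let g be a Lie algebra over a field F of characteristic 0, and suppose g = g₊ ⊕ g₀ ⊕ g₋ is a direct sum decomposition of vector spaces in which g₊, g₀, g₋ are Lie subalgebras of g. Then U(g) = U(g₊) · U(g₀) · U(g₋); that is, U(g) is spanned as an F-vector space by the products a·b·c where a, b, c lie in the images of the canonical algebra homomorphisms U(g₊) → U(g), U(g₀) → U(g), U(g₋) → U(g) induced by the inclusions. -/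
set_option maxHeartbeats 1000000
set_option synthInstance.maxHeartbeats 400000

attribute [local instance 100] LieRing.ofAssociativeRing

/-- The algebra homomorphism `U(k) → U(g)` induced by the inclusion of a Lie
subalgebra `k ⊆ g`. -/
noncomputable def uealOfSubalgebra {F : Type*} [Field F] {g : Type*} [LieRing g]
    [LieAlgebra F g] (k : LieSubalgebra F g) :
    UniversalEnvelopingAlgebra F k →ₐ[F] UniversalEnvelopingAlgebra F g :=
  UniversalEnvelopingAlgebra.lift F
    ((UniversalEnvelopingAlgebra.ι F).comp k.incl)

namespace TriDecomp

open UniversalEnvelopingAlgebra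

/-! ### Generic list lemmas -/

lemma exists_adjacent {α : Type*} (r : α → α → Prop) :
    ∀ l : List α, ¬ l.Chain' r → ∃ u a b v, l = u ++ a :: b :: v ∧ ¬ r a b := by
  intro l
  induction l with
  | nil => intro h; exact absurd List.isChain_nil h
  | cons a l ih =>
    intro h
    match l, ih with
    | [], _ => exact absurd (List.isChain_singleton a) h
    | b :: t, ih =>
      unfold List.Chain' at h; rw [List.isChain_cons_cons] at h
      by_cases hr : r a b
      · obtain ⟨u, a', b', v, hl, hr'⟩ := ih (fun hc => h ⟨hr, hc⟩)
        exact ⟨a :: u, a', b', v, by rw [hl]; rfl, hr'⟩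
      · exact ⟨[], a, b, t, rfl, hr⟩

def invc {α : Type*} (f : α → Fin 3) : List α → ℕ
  | [] => 0
  | a :: s => s.countP (fun b => decide (f b < f a)) + invc f s

lemma invc_cons {α : Type*} (f : α → Fin 3) (a : α) (s : List α) :
    invc f (a :: s) = s.countP (fun b => decide (f b < f a)) + invc f s := rfl

lemma invc_append {α : Type*} (f : α → Fin 3) (u s : List α) :
    invc f (u ++ s) =
      invc f u + (u.map (fun a => s.countP (fun b => decide (f b < f a)))).sum + invc f s := by
  induction u with
  | nil => simp [invc]
  | cons a u ih =>
    rw [List.cons_append, invc_cons, invc_cons, ih, List.countP_append,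
      List.map_cons, List.sum_cons]
    omega

lemma invc_swap {α : Type*} (f : α → Fin 3) (u v : List α) (t t' : α) (h : f t' < f t) :
    invc f (u ++ t' :: t :: v) < invc f (u ++ t :: t' :: v) := by
  rw [invc_append, invc_append]
  have hmap : (fun a => (t' :: t :: v).countP (fun b => decide (f b < f a))) =
      (fun a => (t :: t' :: v).countP (fun b => decide (f b < f a))) := by
    funext a; simp only [List.countP_cons]; omega
  rw [hmap]
  have e1 : invc f (t' :: t :: v) + 1 = invc f (t :: t' :: v) := by
    simp only [invc_cons, List.countP_cons, decide_eq_true_eq]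
    rw [if_pos h, if_neg (not_lt.mpr h.le)]
    omega
  omega

lemma invc_zero_chain {α : Type*} (f : α → Fin 3) :
    ∀ l : List α, invc f l = 0 → l.Chain' (fun a b => f a ≤ f b) := by
  intro l
  induction l with
  | nil => exact fun _ => List.isChain_nil
  | cons a s ih =>
    intro h
    rw [invc_cons, Nat.add_eq_zero] at h
    unfold List.Chain'; rw [List.isChain_cons]
    refine ⟨fun b hb => ?_, ih h.2⟩
    have hb' : b ∈ s := by
      cases s with
      | nil => simp at hb
      | cons c t => simp_all
    have := List.countP_eq_zero.mp h.1 b hb'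
    simp only [decide_eq_true_eq] at this
    exact not_lt.mp this

lemma chain'_split {α : Type*} (f : α → Fin 3) :
    ∀ l : List α, l.Chain' (fun a b => f a ≤ f b) →
      ∃ u v w, l = u ++ v ++ w ∧ (∀ t ∈ u, f t = 0) ∧ (∀ t ∈ v, f t = 1) ∧
        (∀ t ∈ w, f t = 2) := by
  intro l
  induction l with
  | nil => exact fun _ => ⟨[], [], [], by simp⟩
  | cons a l ih =>
    intro h
    obtain ⟨u, v, w, hl, hu, hv, hw⟩ := ih h.tail
    have hle : ∀ b ∈ l, f a ≤ f b := by
      letI : IsTrans α (fun a b => f a ≤ f b) := ⟨fun _ _ _ => le_trans⟩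
      have hp : (a :: l).Pairwise (fun a b => f a ≤ f b) :=
        List.isChain_iff_pairwise.mp h
      exact fun b hb => List.rel_of_pairwise_cons hp hb
    have h3 : f a = 0 ∨ f a = 1 ∨ f a = 2 := by
      generalize f a = i; fin_cases i <;> simp
    rcases h3 with hfa | hfa | hfa
    · exact ⟨a :: u, v, w, by simp [hl], fun t ht => by
        rcases List.mem_cons.mp ht with h' | h'
        · subst h'; exact hfa
        · exact hu t h', hv, hw⟩
    · have hu0 : u = [] := by
        cases u with
        | nil => rfl
        | cons x u' =>
          exfalso
          have hx : x ∈ l := by rw [hl]; simp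
          have h1 := hle x hx
          rw [hfa, hu x (by simp)] at h1
          exact absurd h1 (by decide)
      subst hu0
      refine ⟨[], a :: v, w, by simpa using hl, by simp, fun t ht => ?_, hw⟩
      rcases List.mem_cons.mp ht with h' | h'
      · subst h'; exact hfa
      · exact hv t h'
    · have hu0 : u = [] := by
        cases u with
        | nil => rfl
        | cons x u' =>
          exfalso
          have hx : x ∈ l := by rw [hl]; simp
          have h1 := hle x hx
          rw [hfa, hu x (by simp)] at h1
          exact absurd h1 (by decide)
      subst hu0
      have hv0 : v = [] := by
        cases v with
        | nil => rfl
        | cons x v' =>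
          exfalso
          have hx : x ∈ l := by rw [hl]; simp
          have h1 := hle x hx
          rw [hfa, hv x (by simp)] at h1
          exact absurd h1 (by decide)
      subst hv0
      refine ⟨[], [], a :: w, by simpa using hl, by simp, by simp, fun t ht => ?_⟩
      rcases List.mem_cons.mp ht with h' | h'
      · subst h'; exact hfa
      · exact hw t h'

/-! ### Universal enveloping algebra generalities -/

variable {F : Type*} [Field F] {g : Type*} [LieRing g] [LieAlgebra F g]

lemma ueal_ι (k : LieSubalgebra F g) (x : k) :
    uealOfSubalgebra k (ι F x) = ι F (x : g) :=
  lift_ι_apply F _ x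

/-- `U(g)` is generated as an algebra by the image of `ι`. -/
lemma adjoin_range_ι :
    Algebra.adjoin F (Set.range (ι F : g →ₗ⁅F⁆ UniversalEnvelopingAlgebra F g)) = ⊤ := by
  let A := Algebra.adjoin F (Set.range (ι F : g →ₗ⁅F⁆ UniversalEnvelopingAlgebra F g))
  have hmem : ∀ x : g, ι F x ∈ A := fun x => Algebra.subset_adjoin ⟨x, rfl⟩
  let ι' : g →ₗ⁅F⁆ A :=
    { toFun := fun x => ⟨ι F x, hmem x⟩
      map_add' := fun x y => Subtype.ext (by simp)
      map_smul' := fun c x => Subtype.ext (by simp)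
      map_lie' := fun {x y} => Subtype.ext (by simp [Ring.lie_def]) }
  have key : A.val.comp (lift F ι') = AlgHom.id F _ := by
    ext x
    show A.val (lift F ι' (ι F x)) = ι F x
    rw [lift_ι_apply]
    rfl
  have hA : ∀ u : UniversalEnvelopingAlgebra F g, u ∈ A := by
    intro u
    have := congrArg (fun f => f u) key
    simp only [AlgHom.comp_apply, AlgHom.id_apply] at this
    rw [← this]
    exact (lift F ι' u).2
  exact top_unique fun u _ => hA u

lemma span_monomials_eq_top :
    Submodule.span F {x : UniversalEnvelopingAlgebra F g |
      ∃ l : List g, x = (l.map (ι F)).prod} = ⊤ := by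
  have h1 : (Submonoid.closure (Set.range (ι F : g →ₗ⁅F⁆ UniversalEnvelopingAlgebra F g)) :
      Set (UniversalEnvelopingAlgebra F g)) ⊆
      {x | ∃ l : List g, x = (l.map (ι F)).prod} := by
    intro x hx
    induction hx using Submonoid.closure_induction with
    | mem x hx => obtain ⟨y, rfl⟩ := hx; exact ⟨[y], by simp⟩
    | one => exact ⟨[], by simp⟩
    | mul x y _ _ hx hy =>
        obtain ⟨l, rfl⟩ := hx; obtain ⟨m, rfl⟩ := hy; exact ⟨l ++ m, by simp⟩
  have h2 := Algebra.adjoin_eq_span (R := F)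
    (s := Set.range (ι F : g →ₗ⁅F⁆ UniversalEnvelopingAlgebra F g))
  rw [adjoin_range_ι] at h2
  refine top_unique ?_
  calc (⊤ : Submodule F (UniversalEnvelopingAlgebra F g))
      = Submodule.span F (Submonoid.closure (Set.range (ι F : g →ₗ⁅F⁆ _)) :
          Set (UniversalEnvelopingAlgebra F g)) := by rw [← h2]; rfl
    _ ≤ _ := Submodule.span_mono h1

lemma ι_swap (x y : g) :
    ι F x * ι F y = ι F y * ι F x + ι F ⁅x, y⁆ := by
  have h := (ι F : g →ₗ⁅F⁆ UniversalEnvelopingAlgebra F g).map_lie x y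
  rw [Ring.lie_def] at h
  rw [h]
  abel

/-! ### The triangular setting -/

section Main
variable (gp g0 gm : LieSubalgebra F g)

noncomputable def subalg : Fin 3 → LieSubalgebra F g := ![gp, g0, gm]

def Tg := Σ i : Fin 3, (subalg gp g0 gm i : Type _)

variable {gp g0 gm}

noncomputable def mon (l : List (Tg gp g0 gm)) : UniversalEnvelopingAlgebra F g :=
  (l.map (fun t => ι F (t.2 : g))).prod

lemma mon_nil : mon ([] : List (Tg gp g0 gm)) = 1 := rfl

lemma mon_cons (t : Tg gp g0 gm) (l : List (Tg gp g0 gm)) :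
    mon (t :: l) = ι F (t.2 : g) * mon l := by simp [mon]

lemma mon_append (u v : List (Tg gp g0 gm)) : mon (u ++ v) = mon u * mon v := by
  simp [mon]

variable (gp g0 gm) in
noncomputable def D : Submodule F (UniversalEnvelopingAlgebra F g) :=
  Submodule.span F
    {x : UniversalEnvelopingAlgebra F g |
      ∃ a ∈ Set.range (uealOfSubalgebra gp),
      ∃ b ∈ Set.range (uealOfSubalgebra g0),
      ∃ c ∈ Set.range (uealOfSubalgebra gm),
        x = a * b * c}

lemma triple_mem_D {a b c : UniversalEnvelopingAlgebra F g}
    (ha : a ∈ Set.range (uealOfSubalgebra gp)) (hb : b ∈ Set.range (uealOfSubalgebra g0))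
    (hc : c ∈ Set.range (uealOfSubalgebra gm)) : a * b * c ∈ D gp g0 gm :=
  Submodule.subset_span ⟨a, ha, b, hb, c, hc, rfl⟩

lemma mon_tagged_mem (i : Fin 3) :
    ∀ l : List (Tg gp g0 gm), (∀ t ∈ l, t.1 = i) →
      mon l ∈ Set.range (uealOfSubalgebra (subalg gp g0 gm i)) := by
  intro l
  induction l with
  | nil => exact fun _ => ⟨1, by simpa using mon_nil.symm⟩
  | cons t l ih =>
    rintro h
    obtain ⟨j, x⟩ := t
    have hj : j = i := h _ List.mem_cons_self
    subst hj
    obtain ⟨w, hw⟩ := ih fun t ht => h t (List.mem_cons_of_mem _ ht)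
    exact ⟨ι F x * w, by rw [map_mul, ueal_ι, hw]; exact (mon_cons (⟨j, x⟩ : Tg gp g0 gm) l).symm⟩

lemma chain_mem_D (l : List (Tg gp g0 gm))
    (h : l.Chain' (fun a b => a.1 ≤ b.1)) : mon l ∈ D gp g0 gm := by
  obtain ⟨u, v, w, hl, hu, hv, hw⟩ := chain'_split (fun t : Tg gp g0 gm => t.1) l h
  subst hl
  rw [mon_append, mon_append]
  exact triple_mem_D (mon_tagged_mem 0 u hu) (mon_tagged_mem 1 v hv) (mon_tagged_mem 2 w hw)

variable (gp g0 gm) in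
lemma exists_decomp
    (hdec : DirectSum.IsInternal
      (fun i : Fin 3 => ![gp.toSubmodule, g0.toSubmodule, gm.toSubmodule] i)) (x : g) :
    ∃ p ∈ gp, ∃ z ∈ g0, ∃ m ∈ gm, x = p + z + m := by
  have htop := hdec.submodule_iSup_eq_top
  have hx : x ∈ gp.toSubmodule ⊔ g0.toSubmodule ⊔ gm.toSubmodule := by
    have hle : iSup (fun i : Fin 3 => ![gp.toSubmodule, g0.toSubmodule, gm.toSubmodule] i) ≤
        gp.toSubmodule ⊔ g0.toSubmodule ⊔ gm.toSubmodule := by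
      refine iSup_le fun i => ?_
      fin_cases i
      · exact le_sup_of_le_left le_sup_left
      · exact le_sup_of_le_left le_sup_right
      · exact le_sup_right
    exact hle (htop ▸ Submodule.mem_top)
  obtain ⟨y, hy, m, hm, rfl⟩ := Submodule.mem_sup.mp hx
  obtain ⟨p, hp, z, hz, rfl⟩ := Submodule.mem_sup.mp hy
  exact ⟨p, hp, z, hz, m, hm, rfl⟩

variable (gp g0 gm) in
lemma key
    (hdec : DirectSum.IsInternal
      (fun i : Fin 3 => ![gp.toSubmodule, g0.toSubmodule, gm.toSubmodule] i)) :
    ∀ n k (l : List (Tg gp g0 gm)), l.length ≤ n →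
      invc (fun t => t.1) l ≤ k → mon l ∈ D gp g0 gm := by
  intro n
  induction n with
  | zero =>
    intro k l hlen _
    have hl : l = [] := List.length_eq_zero_iff.mp (Nat.le_zero.mp hlen)
    subst hl
    rw [mon_nil]
    simpa using triple_mem_D (gp := gp) (g0 := g0) (gm := gm)
      ⟨1, map_one _⟩ ⟨1, map_one _⟩ ⟨1, map_one _⟩
  | succ n ihn =>
    intro k
    induction k with
    | zero =>
      intro l hlen hinv
      exact chain_mem_D l (invc_zero_chain _ l (Nat.le_zero.mp hinv))
    | succ k ihk =>
      intro l hlen hinv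
      by_cases hc : l.Chain' (fun a b : Tg gp g0 gm => a.1 ≤ b.1)
      · exact chain_mem_D l hc
      · obtain ⟨u, t, t', v, hl, hr⟩ := exists_adjacent _ l hc
        have ht : t'.1 < t.1 := not_le.mp hr
        subst hl
        obtain ⟨p, hp, z, hz, m, hm, hbr⟩ :=
          exists_decomp gp g0 gm hdec ⁅(t.2 : g), (t'.2 : g)⁆
        set tp : Tg gp g0 gm := ⟨0, ⟨p, hp⟩⟩ with htp
        set tz : Tg gp g0 gm := ⟨1, ⟨z, hz⟩⟩ with htz
        set tm : Tg gp g0 gm := ⟨2, ⟨m, hm⟩⟩ with htm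
        have hb : ι F ⁅(t.2 : g), (t'.2 : g)⁆ =
            ι F (tp.2 : g) + ι F (tz.2 : g) + ι F (tm.2 : g) := by
          rw [hbr]; show ι F (p + z + m) = ι F p + ι F z + ι F m; rw [map_add, map_add]
        have hkey : ι F (t.2 : g) * ι F (t'.2 : g) =
            ι F (t'.2 : g) * ι F (t.2 : g) +
              (ι F (tp.2 : g) + ι F (tz.2 : g) + ι F (tm.2 : g)) := by
          rw [ι_swap, hb]
        have hsplit : mon (u ++ t :: t' :: v) =
            mon (u ++ t' :: t :: v) +
              (mon (u ++ tp :: v) + mon (u ++ tz :: v) + mon (u ++ tm :: v)) := by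
          rw [mon_append, mon_append, mon_append, mon_append, mon_append,
            mon_cons, mon_cons, mon_cons, mon_cons, mon_cons, mon_cons, mon_cons]
          rw [← mul_assoc (ι F (t.2 : g)), hkey]
          noncomm_ring
        rw [hsplit]
        refine Submodule.add_mem _ ?_ (Submodule.add_mem _ (Submodule.add_mem _ ?_ ?_) ?_)
        · refine ihk (u ++ t' :: t :: v) (by simpa using hlen) ?_
          have hlt := invc_swap (fun t : Tg gp g0 gm => t.1) u v t t' ht
          omega
        · exact ihn (invc (fun t : Tg gp g0 gm => t.1) (u ++ tp :: v)) (u ++ tp :: v)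
            (by simp at hlen ⊢; omega) le_rfl
        · exact ihn (invc (fun t : Tg gp g0 gm => t.1) (u ++ tz :: v)) (u ++ tz :: v)
            (by simp at hlen ⊢; omega) le_rfl
        · exact ihn (invc (fun t : Tg gp g0 gm => t.1) (u ++ tm :: v)) (u ++ tm :: v)
            (by simp at hlen ⊢; omega) le_rfl

variable (gp g0 gm) in
lemma untagged_mem
    (hdec : DirectSum.IsInternal
      (fun i : Fin 3 => ![gp.toSubmodule, g0.toSubmodule, gm.toSubmodule] i))
    (l : List g) : (l.map (ι F)).prod ∈ D gp g0 gm := by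
  suffices h : (l.map (ι F)).prod ∈
      Submodule.span F (Set.range (mon : List (Tg gp g0 gm) → _)) by
    refine Submodule.span_le.mpr ?_ h
    rintro x ⟨t, rfl⟩
    exact key gp g0 gm hdec t.length (invc (fun t : Tg gp g0 gm => t.1) t) t le_rfl le_rfl
  induction l with
  | nil => exact Submodule.subset_span ⟨[], rfl⟩
  | cons x l ih =>
    rw [List.map_cons, List.prod_cons]
    obtain ⟨p, hp, z, hz, m, hm, hx⟩ := exists_decomp gp g0 gm hdec x
    have hmul : ∀ c : Tg gp g0 gm,
        ∀ y ∈ Submodule.span F (Set.range (mon : List (Tg gp g0 gm) → _)),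
          ι F (c.2 : g) * y ∈
            Submodule.span F (Set.range (mon : List (Tg gp g0 gm) → _)) := by
      intro c y hy
      induction hy using Submodule.span_induction with
      | mem y hy =>
        obtain ⟨t, rfl⟩ := hy
        exact Submodule.subset_span ⟨c :: t, mon_cons c t⟩
      | zero => simp
      | add a b _ _ ha hb => rw [mul_add]; exact Submodule.add_mem _ ha hb
      | smul r a _ ha => rw [mul_smul_comm]; exact Submodule.smul_mem _ _ ha
    have hx' : ι F x = ι F p + ι F z + ι F m := by rw [hx]; simp
    rw [hx', add_mul, add_mul]
    exact Submodule.add_mem _ (Submodule.add_mem _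
      (hmul ⟨0, ⟨p, hp⟩⟩ _ ih) (hmul ⟨1, ⟨z, hz⟩⟩ _ ih)) (hmul ⟨2, ⟨m, hm⟩⟩ _ ih)

end Main
end TriDecomp

/-- Triangular decomposition of the universal enveloping algebra: if
`g = g₊ ⊕ g₀ ⊕ g₋` as vector spaces, with `g₊, g₀, g₋` Lie subalgebras, then
`U(g) = U(g₊) · U(g₀) · U(g₋)`: `U(g)` is spanned by products `a·b·c` with
`a, b, c` in the images of `U(g₊), U(g₀), U(g₋)` respectively. -/
theorem ueal_triangular_decomposition
    {F : Type*} [Field F] [CharZero F] {g : Type*} [LieRing g] [LieAlgebra F g]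
    (gp g0 gm : LieSubalgebra F g)
    (hdec : DirectSum.IsInternal
      (fun i : Fin 3 => ![gp.toSubmodule, g0.toSubmodule, gm.toSubmodule] i)) :
    Submodule.span F
      {x : UniversalEnvelopingAlgebra F g |
        ∃ a ∈ Set.range (uealOfSubalgebra gp),
        ∃ b ∈ Set.range (uealOfSubalgebra g0),
        ∃ c ∈ Set.range (uealOfSubalgebra gm),
          x = a * b * c} = ⊤ := by
  refine top_unique ?_
  rw [← TriDecomp.span_monomials_eq_top]
  refine Submodule.span_le.mpr ?_
  rintro x ⟨l, rfl⟩
  exact TriDecomp.untagged_mem gp g0 gm hdec l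
end
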